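/- Under the hypotheses of the per-layer error bound (1-Lipschitz entrywise activation, ‖W^{(l)}‖_F ≤ τ, signals bounded by B, per-layer weight perturbation at most ε in Frobenius norm after permutation, permuted biases), the outputs y = x^{(L+1)} of the original network and ŷ = x̂^{(L+1)} of the modified network satisfy, with Π = Π^{(L)}: ‖ŷ − Π y‖₂ ≤ εB·Σ_{k=0}^{L−1}(τ+ε)^k, which equals εB·((τ+ε)^L − 1)/(τ+ε−1) when τ+ε ≠ 1. In particular, if τ = 1 then ‖ŷ − Π y‖₂ ≤ ((1+ε)^L − 1)·B. -/
import Mathlib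


open Matrix

/-- Frobenius norm of a real matrix. -/
noncomputable def frob {m n : ℕ} (A : Matrix (Fin m) (Fin n) ℝ) : ℝ :=
  Real.sqrt (∑ i, ∑ j, (A i j) ^ 2)

/-- Euclidean (ℓ₂) norm of a vector. -/
noncomputable def l2 {n : ℕ} (v : Fin n → ℝ) : ℝ :=
  Real.sqrt (∑ i, (v i) ^ 2)

/-- The permutation matrix of `e`, with `(permMat e) i j = 1` iff `i = e j`. -/
def permMat {n : ℕ} (e : Equiv.Perm (Fin n)) : Matrix (Fin n) (Fin n) ℝ :=
  fun i j => if i = e j then 1 else 0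

lemma l2_nonneg {n : ℕ} (v : Fin n → ℝ) : 0 ≤ l2 v := Real.sqrt_nonneg _

lemma frob_nonneg {m n : ℕ} (A : Matrix (Fin m) (Fin n) ℝ) : 0 ≤ frob A := Real.sqrt_nonneg _

lemma l2_eq_norm {n : ℕ} (v : Fin n → ℝ) :
    l2 v = ‖(WithLp.equiv 2 (Fin n → ℝ)).symm v‖ := by
  rw [EuclideanSpace.norm_eq]
  simp [l2, Real.norm_eq_abs, sq_abs]

lemma l2_add_le {n : ℕ} (u v : Fin n → ℝ) : l2 (u + v) ≤ l2 u + l2 v := by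
  rw [l2_eq_norm, l2_eq_norm, l2_eq_norm]
  exact norm_add_le _ _

lemma l2_neg {n : ℕ} (v : Fin n → ℝ) : l2 (-v) = l2 v := by
  simp [l2]

lemma frob_neg {m n : ℕ} (A : Matrix (Fin m) (Fin n) ℝ) : frob (-A) = frob A := by
  simp [frob]

lemma l2_mulVec_le {m n : ℕ} (A : Matrix (Fin m) (Fin n) ℝ) (v : Fin m → ℝ) :
    l2 (Aᵀ.mulVec v) ≤ frob A * l2 v := by
  rw [l2, frob, l2, ← Real.sqrt_mul (by positivity)]
  apply Real.sqrt_le_sqrt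
  rw [Finset.sum_comm (s := Finset.univ) (t := Finset.univ)
      (f := fun i j => (A i j) ^ 2), Finset.sum_mul]
  apply Finset.sum_le_sum
  intro j _
  have h := Finset.sum_mul_sq_le_sq_mul_sq Finset.univ (fun i => A i j) v
  have : Aᵀ.mulVec v j = ∑ i, A i j * v i := by
    simp [Matrix.mulVec, dotProduct, Matrix.transpose_apply, mul_comm]
  rw [this]
  exact h

lemma permMat_mulVec {n : ℕ} (f : Equiv.Perm (Fin n)) (v : Fin n → ℝ) :
    (permMat f).mulVec v = fun i => v (f.symm i) := by
  funext i
  simp only [permMat, Matrix.mulVec, dotProduct]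
  have hiff : ∀ x, (i = f x) ↔ (f.symm i = x) := fun x => by
    constructor
    · intro h; simp [h]
    · intro h; rw [← h]; simp
  simp_rw [hiff]
  simp

lemma l2_comp_symm {n : ℕ} (f : Equiv.Perm (Fin n)) (v : Fin n → ℝ) :
    l2 (fun i => v (f.symm i)) = l2 v := by
  unfold l2
  congr 1
  exact Equiv.sum_comp f.symm (fun i => (v i) ^ 2)

lemma l2_permMat {n : ℕ} (f : Equiv.Perm (Fin n)) (v : Fin n → ℝ) :
    l2 ((permMat f).mulVec v) = l2 v := by
  rw [permMat_mulVec, l2_comp_symm]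

lemma permMat_transpose {n : ℕ} (f : Equiv.Perm (Fin n)) :
    (permMat f)ᵀ = permMat f.symm := by
  funext i j
  simp only [Matrix.transpose_apply, permMat]
  by_cases h : j = f i
  · simp [h]
  · have h2 : ¬ i = f.symm j := fun hh => h (by simp [hh])
    simp [h, h2]

lemma permMat_mul_apply {m n : ℕ} (f : Equiv.Perm (Fin m)) (A : Matrix (Fin m) (Fin n) ℝ)
    (i : Fin m) (j : Fin n) : (permMat f * A) i j = A (f.symm i) j := by
  have : (permMat f * A) i j = ((permMat f).mulVec fun k => A k j) i := by
    simp [Matrix.mul_apply, Matrix.mulVec, dotProduct]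
  rw [this, permMat_mulVec]

lemma mul_permMatT_apply {m n : ℕ} (g : Equiv.Perm (Fin n)) (A : Matrix (Fin m) (Fin n) ℝ)
    (i : Fin m) (j : Fin n) : (A * (permMat g)ᵀ) i j = A i (g.symm j) := by
  have : (A * (permMat g)ᵀ) i j = ((permMat g).mulVec fun k => A i k) j := by
    simp [Matrix.mul_apply, Matrix.mulVec, dotProduct, Matrix.transpose_apply, mul_comm]
  rw [this, permMat_mulVec]

lemma frob_conj {m n : ℕ} (f : Equiv.Perm (Fin m)) (g : Equiv.Perm (Fin n))
    (A : Matrix (Fin m) (Fin n) ℝ) : frob (permMat f * A * (permMat g)ᵀ) = frob A := by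
  unfold frob
  congr 1
  have h1 : ∀ i j, (permMat f * A * (permMat g)ᵀ) i j = A (f.symm i) (g.symm j) := by
    intro i j
    rw [mul_permMatT_apply, permMat_mul_apply]
  calc ∑ i, ∑ j, ((permMat f * A * (permMat g)ᵀ) i j) ^ 2
      = ∑ i, ∑ j, (A (f.symm i) (g.symm j)) ^ 2 := by
        refine Finset.sum_congr rfl fun i _ => Finset.sum_congr rfl fun j _ => by rw [h1]
    _ = ∑ i, ∑ j, (A (f.symm i) j) ^ 2 := by
        refine Finset.sum_congr rfl fun i _ => ?_
        exact Equiv.sum_comp g.symm (fun j => (A (f.symm i) j) ^ 2)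
    _ = ∑ i, ∑ j, (A i j) ^ 2 :=
        Equiv.sum_comp f.symm (fun i => ∑ j, (A i j) ^ 2)

lemma l2_lip {n : ℕ} (σ : ℝ → ℝ) (hσ : ∀ u v : ℝ, |σ u - σ v| ≤ |u - v|)
    (u v : Fin n → ℝ) :
    l2 (fun i => σ (u i) - σ (v i)) ≤ l2 (u - v) := by
  apply Real.sqrt_le_sqrt
  apply Finset.sum_le_sum
  intro i _
  have := hσ (u i) (v i)
  calc (σ (u i) - σ (v i)) ^ 2 = |σ (u i) - σ (v i)| ^ 2 := (sq_abs _).symm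
    _ ≤ |u i - v i| ^ 2 := by nlinarith [abs_nonneg (σ (u i) - σ (v i))]
    _ = ((u - v) i) ^ 2 := by simp [sq_abs]

/-- Per-layer error bound for the RePurposed network. The original network has
signals `x (l+1) = σ((W l)ᵀ x l + b l)` started at `x 0`; the modified network
uses permutations `e l` (with `e 0 = id`), weights `Ŵ l` that are `ε`-close in
Frobenius norm to `Π^{(l)} · W l · (Π^{(l+1)})ᵀ`, and permuted biases. Then the output of the
modified network deviates from the permuted original output by at most
`εB·Σ_{k<L}(τ+ε)^k`, with the closed geometric form when `τ+ε ≠ 1`, and the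
bound `((1+ε)^L − 1)·B` when `τ = 1`. -/
theorem stmt_11 (L : ℕ) (d : ℕ → ℕ)
    (σ : ℝ → ℝ) (hσ : ∀ u v : ℝ, |σ u - σ v| ≤ |u - v|)
    (W : ∀ l, Matrix (Fin (d l)) (Fin (d (l + 1))) ℝ)
    (b : ∀ l, Fin (d (l + 1)) → ℝ)
    (x : ∀ l, Fin (d l) → ℝ)
    (hx : ∀ l, x (l + 1) = fun i => σ (((W l)ᵀ.mulVec (x l) + b l) i))
    (τ B ε : ℝ) (hτ : 0 < τ) (hB : 0 < B) (hε : 0 ≤ ε)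
    (hWτ : ∀ l, l < L → frob (W l) ≤ τ)
    (hxB : ∀ l, l ≤ L → l2 (x l) ≤ B)
    (e : ∀ l, Equiv.Perm (Fin (d l)))
    (he0 : e 0 = Equiv.refl (Fin (d 0)))
    (Wh : ∀ l, Matrix (Fin (d l)) (Fin (d (l + 1))) ℝ)
    (hWh : ∀ l, l < L →
      frob (Wh l - permMat (e l) * W l * (permMat (e (l + 1)))ᵀ) ≤ ε)
    (bh : ∀ l, Fin (d (l + 1)) → ℝ)
    (hbh : ∀ l, bh l = (permMat (e (l + 1))).mulVec (b l))
    (xh : ∀ l, Fin (d l) → ℝ)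
    (hxh0 : xh 0 = x 0)
    (hxh : ∀ l, xh (l + 1) = fun i => σ (((Wh l)ᵀ.mulVec (xh l) + bh l) i)) :
    l2 ((permMat (e L)).mulVec (x L) - xh L)
        ≤ ε * B * (∑ k ∈ Finset.range L, (τ + ε) ^ k) ∧
      (τ + ε ≠ 1 →
        l2 ((permMat (e L)).mulVec (x L) - xh L)
          ≤ ε * B * ((τ + ε) ^ L - 1) / (τ + ε - 1)) ∧
      (τ = 1 →
        l2 ((permMat (e L)).mulVec (x L) - xh L)
          ≤ ((1 + ε) ^ L - 1) * B) := by
  have key : ∀ l, l ≤ L →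
      l2 ((permMat (e l)).mulVec (x l) - xh l)
        ≤ ε * B * ∑ k ∈ Finset.range l, (τ + ε) ^ k := by
    intro l
    induction l with
    | zero =>
      intro _
      rw [he0, hxh0]
      have h0 : (permMat (Equiv.refl (Fin (d 0)))).mulVec (x 0) - x 0 = 0 := by
        rw [permMat_mulVec]
        funext i; simp
      rw [h0]
      simp [l2]
    | succ l IH =>
      intro hl
      have hlL : l < L := hl
      have IH' := IH (Nat.le_of_lt hlL)
      set P1 := permMat (e l) with hP1def
      set P2 := permMat (e (l + 1)) with hP2def
      set M := P1 * W l * P2ᵀ with hM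
      have hMT : Mᵀ = P2 * ((W l)ᵀ * P1ᵀ) := by
        simp [hM, Matrix.transpose_mul, Matrix.mul_assoc]
      have hP1inv : P1ᵀ.mulVec (P1.mulVec (x l)) = x l := by
        rw [hP1def, permMat_transpose, permMat_mulVec, permMat_mulVec]
        funext i; simp
      have h1 : Mᵀ.mulVec (P1.mulVec (x l)) = P2.mulVec ((W l)ᵀ.mulVec (x l)) := by
        rw [hMT, ← Matrix.mulVec_mulVec, ← Matrix.mulVec_mulVec, hP1inv]
      have h2 : Mᵀ.mulVec (P1.mulVec (x l)) + bh l
          = P2.mulVec ((W l)ᵀ.mulVec (x l) + b l) := by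
        rw [h1, hbh, Matrix.mulVec_add]
      have hsig : P2.mulVec (x (l + 1))
          = fun i => σ ((Mᵀ.mulVec (P1.mulVec (x l)) + bh l) i) := by
        rw [h2, hx l, hP2def, permMat_mulVec, permMat_mulVec]
      set u := Mᵀ.mulVec (P1.mulVec (x l)) + bh l with hu
      set v := (Wh l)ᵀ.mulVec (xh l) + bh l with hv
      have hdiff : P2.mulVec (x (l + 1)) - xh (l + 1)
          = fun i => σ (u i) - σ (v i) := by
        rw [hsig, hxh l]
        rfl
      set D := P1.mulVec (x l) - xh l with hD
      have huv : u - v = Mᵀ.mulVec D - (Wh l - M)ᵀ.mulVec (xh l) := by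
        rw [hu, hv, hD, Matrix.mulVec_sub, Matrix.transpose_sub, Matrix.sub_mulVec]
        abel
      have hbound1 : l2 (u - v) ≤ frob M * l2 D + frob (Wh l - M) * l2 (xh l) := by
        rw [huv, sub_eq_add_neg]
        calc l2 (Mᵀ.mulVec D + -((Wh l - M)ᵀ.mulVec (xh l)))
            ≤ l2 (Mᵀ.mulVec D) + l2 (-((Wh l - M)ᵀ.mulVec (xh l))) := l2_add_le _ _
          _ = l2 (Mᵀ.mulVec D) + l2 ((Wh l - M)ᵀ.mulVec (xh l)) := by rw [l2_neg]
          _ ≤ frob M * l2 D + frob (Wh l - M) * l2 (xh l) :=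
              add_le_add (l2_mulVec_le _ _) (l2_mulVec_le _ _)
      have hfM : frob M ≤ τ := by
        rw [hM, hP1def, hP2def, frob_conj]
        exact hWτ l hlL
      have hfWh : frob (Wh l - M) ≤ ε := hWh l hlL
      have hxhB : l2 (xh l) ≤ B + l2 D := by
        have hx1 : xh l = P1.mulVec (x l) + -D := by rw [hD]; abel
        calc l2 (xh l) = l2 (P1.mulVec (x l) + -D) := by rw [← hx1]
          _ ≤ l2 (P1.mulVec (x l)) + l2 (-D) := l2_add_le _ _
          _ = l2 (x l) + l2 D := by rw [l2_neg, hP1def, l2_permMat]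
          _ ≤ B + l2 D := by gcongr; exact hxB l (Nat.le_of_lt hlL)
      have hDnn : 0 ≤ l2 D := l2_nonneg _
      have hxhnn : 0 ≤ l2 (xh l) := l2_nonneg _
      have hMnn : 0 ≤ frob M := frob_nonneg _
      have hWhnn : 0 ≤ frob (Wh l - M) := frob_nonneg _
      have hchain : l2 (P2.mulVec (x (l + 1)) - xh (l + 1)) ≤ (τ + ε) * l2 D + ε * B := by
        calc l2 (P2.mulVec (x (l + 1)) - xh (l + 1))
            = l2 (fun i => σ (u i) - σ (v i)) := by rw [hdiff]
          _ ≤ l2 (u - v) := l2_lip σ hσ u v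
          _ ≤ frob M * l2 D + frob (Wh l - M) * l2 (xh l) := hbound1
          _ ≤ τ * l2 D + ε * (B + l2 D) := by
              have g1 : frob M * l2 D ≤ τ * l2 D :=
                mul_le_mul_of_nonneg_right hfM hDnn
              have g2 : frob (Wh l - M) * l2 (xh l) ≤ ε * (B + l2 D) :=
                mul_le_mul hfWh hxhB hxhnn hε
              linarith
          _ = (τ + ε) * l2 D + ε * B := by ring
      have hSnn : 0 ≤ ∑ k ∈ Finset.range l, (τ + ε) ^ k := by positivity
      have hmul : (τ + ε) * l2 D ≤ (τ + ε) * (ε * B * ∑ k ∈ Finset.range l, (τ + ε) ^ k) :=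
        mul_le_mul_of_nonneg_left IH' (by positivity)
      calc l2 (P2.mulVec (x (l + 1)) - xh (l + 1))
          ≤ (τ + ε) * l2 D + ε * B := hchain
        _ ≤ (τ + ε) * (ε * B * ∑ k ∈ Finset.range l, (τ + ε) ^ k) + ε * B := by linarith
        _ = ε * B * ∑ k ∈ Finset.range (l + 1), (τ + ε) ^ k := by
            rw [geom_sum_succ]; ring
  have main := key L le_rfl
  refine ⟨main, fun hne => ?_, fun hτ1 => ?_⟩
  · rw [geom_sum_eq hne] at main
    calc l2 ((permMat (e L)).mulVec (x L) - xh L)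
        ≤ ε * B * (((τ + ε) ^ L - 1) / (τ + ε - 1)) := main
      _ = ε * B * ((τ + ε) ^ L - 1) / (τ + ε - 1) := by ring
  · subst hτ1
    have hg := geom_sum_mul (1 + ε) L
    have h1e : (1:ℝ) + ε = 1 + ε := rfl
    have : ((1 + ε) ^ L - 1) * B = ε * B * ∑ k ∈ Finset.range L, (1 + ε) ^ k := by
      rw [← hg]; ring
    rw [this]
    simpa [add_comm] using main
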